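/- arXiv:2406.04737 — 2 statements merged into one kernel-verified Lean document; each statement's English description precedes it below -/
import Mathlib

section
/- For σ > 0 and φ with cos(2φ) ≥ 0 (e.g., φ ∈ [0, π/4]), the function s ↦ E(s, φ) = (cos 2φ − s·cos 2φ)·erf(1/√(2s)) + √(2s/π)·cos(2φ)·e^{−1/(2s)} + sin²φ is nonincreasing in s = σ² on (0, ∞); for φ ∈ (π/4, π/2] (cos 2φ ≤ 0) it is nondecreasing. -/
open Real

noncomputable def erf (t : ℝ) : ℝ :=
  (2 / Real.sqrt π) * ∫ u in (0:ℝ)..t, Real.exp (-(u ^ 2))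

noncomputable def Egain (s φ : ℝ) : ℝ :=
  (cos (2 * φ) - s * cos (2 * φ)) * erf (1 / Real.sqrt (2 * s))
    + Real.sqrt (2 * s / π) * cos (2 * φ) * Real.exp (-(1 / (2 * s)))
    + sin φ ^ 2

noncomputable def g (s : ℝ) : ℝ :=
  (1 - s) * erf (1 / Real.sqrt (2 * s)) + Real.sqrt (2 * s / π) * Real.exp (-(1 / (2 * s)))

lemma cont_exp_sq : Continuous (fun u : ℝ => Real.exp (-(u ^ 2))) := by
  continuity

lemma hasDerivAt_erf (t : ℝ) :
    HasDerivAt erf ((2 / Real.sqrt π) * Real.exp (-(t ^ 2))) t := by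
  have h : HasDerivAt (fun x => ∫ u in (0:ℝ)..x, Real.exp (-(u ^ 2)))
      (Real.exp (-(t ^ 2))) t :=
    intervalIntegral.integral_hasDerivAt_right
      (cont_exp_sq.intervalIntegrable _ _)
      (cont_exp_sq.stronglyMeasurableAtFilter _ _)
      cont_exp_sq.continuousAt
  exact h.const_mul _

lemma erf_lower {t : ℝ} (ht : 0 ≤ t) :
    (2 / Real.sqrt π) * (t * Real.exp (-(t ^ 2))) ≤ erf t := by
  have h1 : ∫ u in (0:ℝ)..t, Real.exp (-(t ^ 2)) ≤ ∫ u in (0:ℝ)..t, Real.exp (-(u ^ 2)) := by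
    apply intervalIntegral.integral_mono_on ht
      (intervalIntegrable_const)
      (cont_exp_sq.intervalIntegrable _ _)
    intro x hx
    apply Real.exp_le_exp.2
    have hx0 : 0 ≤ x := hx.1
    have hxt : x ≤ t := hx.2
    nlinarith
  have h2 : ∫ u in (0:ℝ)..t, Real.exp (-(t ^ 2)) = t * Real.exp (-(t ^ 2)) := by
    simp [intervalIntegral.integral_const]
  rw [erf]
  have hpi : (0:ℝ) ≤ 2 / Real.sqrt π := by positivity
  calc (2 / Real.sqrt π) * (t * Real.exp (-(t ^ 2)))
      = (2 / Real.sqrt π) * ∫ u in (0:ℝ)..t, Real.exp (-(t ^ 2)) := by rw [h2]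
    _ ≤ _ := mul_le_mul_of_nonneg_left h1 hpi

lemma g_hasDerivAt {s : ℝ} (hs : 0 < s) :
    HasDerivAt g (-erf (1 / Real.sqrt (2 * s))
      + (2 / Real.sqrt π) * ((1 / Real.sqrt (2 * s)) * Real.exp (-((1 / Real.sqrt (2 * s)) ^ 2)))) s := by
  have h2s : (0:ℝ) < 2 * s := by linarith
  have hq : (0:ℝ) < Real.sqrt (2 * s) := Real.sqrt_pos.2 h2s
  have hqne : Real.sqrt (2 * s) ≠ 0 := ne_of_gt hq
  have hsne : s ≠ 0 := ne_of_gt hs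
  have hpi : (0:ℝ) < Real.sqrt π := Real.sqrt_pos.2 Real.pi_pos
  -- derivative of s ↦ 2*s
  have hlin : HasDerivAt (fun x : ℝ => 2 * x) 2 s := by
    simpa using (hasDerivAt_id s).const_mul 2
  -- derivative of s ↦ √(2s)
  have hsqrt : HasDerivAt (fun x : ℝ => Real.sqrt (2 * x)) (1 / (2 * Real.sqrt (2 * s)) * 2) s :=
    (Real.hasDerivAt_sqrt (ne_of_gt h2s)).comp s hlin
  -- derivative of s ↦ 1/√(2s)
  have hinv : HasDerivAt (fun x : ℝ => 1 / Real.sqrt (2 * x))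
      (-(1 / (2 * Real.sqrt (2 * s)) * 2) / (Real.sqrt (2 * s)) ^ 2) s := by
    simpa only [one_div, Pi.inv_def] using hsqrt.inv hqne
  -- derivative of s ↦ erf (1/√(2s))
  have herf : HasDerivAt (fun x : ℝ => erf (1 / Real.sqrt (2 * x)))
      ((2 / Real.sqrt π) * Real.exp (-((1 / Real.sqrt (2 * s)) ^ 2))
        * (-(1 / (2 * Real.sqrt (2 * s)) * 2) / (Real.sqrt (2 * s)) ^ 2)) s :=
    (hasDerivAt_erf _).comp s hinv
  -- derivative of s ↦ (1-s)
  have hone : HasDerivAt (fun x : ℝ => 1 - x) (-1) s := by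
    simpa using (hasDerivAt_id s).const_sub 1
  -- derivative of the first product
  have hA : HasDerivAt (fun x : ℝ => (1 - x) * erf (1 / Real.sqrt (2 * x)))
      ((-1) * erf (1 / Real.sqrt (2 * s)) + (1 - s) *
        ((2 / Real.sqrt π) * Real.exp (-((1 / Real.sqrt (2 * s)) ^ 2))
          * (-(1 / (2 * Real.sqrt (2 * s)) * 2) / (Real.sqrt (2 * s)) ^ 2))) s :=
    hone.mul herf
  -- derivative of s ↦ √(2s/π)
  have hlin2 : HasDerivAt (fun x : ℝ => 2 * x / π) (2 / π) s := hlin.div_const π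
  have hsqrt2 : HasDerivAt (fun x : ℝ => Real.sqrt (2 * x / π))
      (1 / (2 * Real.sqrt (2 * s / π)) * (2 / π)) s :=
    (Real.hasDerivAt_sqrt (by positivity)).comp s hlin2
  -- derivative of s ↦ exp(-(1/(2s)))
  have hw : HasDerivAt (fun x : ℝ => -(1 / (2 * x))) (-(-2 / (2 * s) ^ 2)) s := by
    have := (hlin.inv (ne_of_gt h2s)).neg
    simpa only [one_div, Pi.inv_def, Pi.neg_def] using this
  have hexp : HasDerivAt (fun x : ℝ => Real.exp (-(1 / (2 * x))))
      (Real.exp (-(1 / (2 * s))) * (-(-2 / (2 * s) ^ 2))) s :=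
    (Real.hasDerivAt_exp _).comp s hw
  have hB : HasDerivAt (fun x : ℝ => Real.sqrt (2 * x / π) * Real.exp (-(1 / (2 * x))))
      (1 / (2 * Real.sqrt (2 * s / π)) * (2 / π) * Real.exp (-(1 / (2 * s)))
        + Real.sqrt (2 * s / π) * (Real.exp (-(1 / (2 * s))) * (-(-2 / (2 * s) ^ 2)))) s :=
    hsqrt2.mul hexp
  have htotal := hA.add hB
  have hval : ((-1) * erf (1 / Real.sqrt (2 * s)) + (1 - s) *
        ((2 / Real.sqrt π) * Real.exp (-((1 / Real.sqrt (2 * s)) ^ 2))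
          * (-(1 / (2 * Real.sqrt (2 * s)) * 2) / (Real.sqrt (2 * s)) ^ 2)))
      + (1 / (2 * Real.sqrt (2 * s / π)) * (2 / π) * Real.exp (-(1 / (2 * s)))
        + Real.sqrt (2 * s / π) * (Real.exp (-(1 / (2 * s))) * (-(-2 / (2 * s) ^ 2))))
      = -erf (1 / Real.sqrt (2 * s))
      + (2 / Real.sqrt π) * ((1 / Real.sqrt (2 * s)) * Real.exp (-((1 / Real.sqrt (2 * s)) ^ 2))) := by
    have hq2 : Real.sqrt (2 * s) ^ 2 = 2 * s := Real.sq_sqrt (le_of_lt h2s)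
    have hqpi : Real.sqrt (2 * s / π) = Real.sqrt (2 * s) / Real.sqrt π :=
      Real.sqrt_div (le_of_lt h2s) π
    have hexp_eq : Real.exp (-((1 / Real.sqrt (2 * s)) ^ 2)) = Real.exp (-(1 / (2 * s))) := by
      rw [div_pow, one_pow, hq2]
    rw [hexp_eq, hqpi]
    have hpine : Real.sqrt π ≠ 0 := ne_of_gt hpi
    have hp2 : Real.sqrt π ^ 2 = π := Real.sq_sqrt (le_of_lt Real.pi_pos)
    have hpine2 : π ≠ 0 := ne_of_gt Real.pi_pos
    set q := Real.sqrt (2 * s) with hqdef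
    set p := Real.sqrt π with hpdef
    set E := Real.exp (-(1 / (2 * s))) with hEdef
    rw [← hp2]
    field_simp
    linear_combination (E*q^2 + 2*s*E - 2*s^2*E) * hq2
  rw [hval] at htotal
  exact htotal

lemma g_antitone : AntitoneOn g (Set.Ioi (0:ℝ)) := by
  have hderiv : ∀ s ∈ Set.Ioi (0:ℝ), HasDerivAt g (-erf (1 / Real.sqrt (2 * s))
      + (2 / Real.sqrt π) * ((1 / Real.sqrt (2 * s)) * Real.exp (-((1 / Real.sqrt (2 * s)) ^ 2)))) s :=
    fun s hs => g_hasDerivAt hs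
  have hdiff : DifferentiableOn ℝ g (interior (Set.Ioi (0:ℝ))) := by
    rw [interior_Ioi]
    exact fun s hs => (hderiv s hs).differentiableAt.differentiableWithinAt
  apply antitoneOn_of_deriv_nonpos (convex_Ioi 0)
  · exact fun s hs => (hderiv s hs).differentiableAt.continuousAt.continuousWithinAt
  · exact hdiff
  · intro s hs
    rw [interior_Ioi] at hs
    rw [(hderiv s hs).deriv]
    have ht : 0 ≤ 1 / Real.sqrt (2 * s) := by positivity
    have := erf_lower ht
    linarith

theorem Egain_monotonicity (φ : ℝ) :
    (0 ≤ cos (2 * φ) → AntitoneOn (fun s => Egain s φ) (Set.Ioi (0:ℝ))) ∧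
    (cos (2 * φ) ≤ 0 → MonotoneOn (fun s => Egain s φ) (Set.Ioi (0:ℝ))) := by
  have hEg : ∀ s, Egain s φ = cos (2 * φ) * g s + sin φ ^ 2 := by
    intro s; rw [Egain, g]; ring
  constructor
  · intro hc a ha b hb hab
    simp only [hEg]
    have := g_antitone ha hb hab
    nlinarith
  · intro hc a ha b hb hab
    simp only [hEg]
    have := g_antitone ha hb hab
    nlinarith
end

section
/- Let Y ~ N(0, σ²) and for fixed φ define J = cos²φ(1 − min(Y²,1)) + sin²φ·min(Y²,1) − sign(Y)·2cosφ sinφ·√(min(Y²,1) − min(Y²,1)²). Then E[J] = (cos 2φ)(1 − σ²)·erf(1/√(2σ²)) + √(2σ²/π)·cos(2φ)·e^{−1/(2σ²)} + sin²φ. -/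
open Real MeasureTheory ProbabilityTheory
open scoped NNReal ENNReal

private lemma measurable_realSign : Measurable Real.sign := by
  have h : Real.sign = fun r : ℝ => if r < 0 then (-1:ℝ) else if 0 < r then 1 else 0 := by
    funext r; rfl
  rw [h]
  exact Measurable.ite measurableSet_Iio measurable_const
    (Measurable.ite measurableSet_Ioi measurable_const measurable_const)

private lemma integral_gaussianReal_eq' {v : ℝ≥0} (hv : v ≠ 0) (f : ℝ → ℝ) :
    ∫ y, f y ∂(gaussianReal 0 v) = ∫ y, gaussianPDFReal 0 v y * f y := by
  rw [gaussianReal_of_var_ne_zero _ hv, gaussianPDF_def]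
  have h : (fun x => ENNReal.ofReal (gaussianPDFReal 0 v x))
      = fun x => ((gaussianPDFReal 0 v x).toNNReal : ENNReal) := rfl
  rw [h, integral_withDensity_eq_integral_smul ((measurable_gaussianPDFReal 0 v).real_toNNReal)]
  congr 1; funext x
  simp [NNReal.smul_def, Real.coe_toNNReal _ (gaussianPDFReal_nonneg 0 v x)]

private lemma gaussianReal_map_neg (v : ℝ≥0) :
    (gaussianReal 0 v).map (fun y => -y) = gaussianReal 0 v := by
  have h := gaussianReal_map_const_mul (μ := 0) (v := v) (-1)
  have h1 : (NNReal.mk ((-1:ℝ)^2) (sq_nonneg _)) = 1 := by ext; norm_num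
  rw [h1, one_mul, mul_zero] at h
  simpa [neg_one_mul] using h

private lemma integral_odd_gaussianReal {v : ℝ≥0} (f : ℝ → ℝ) (hf : Measurable f)
    (hodd : ∀ y, f (-y) = - f y) : ∫ y, f y ∂(gaussianReal 0 v) = 0 := by
  have h : ∫ y, f y ∂(gaussianReal 0 v) = ∫ y, f (-y) ∂(gaussianReal 0 v) := by
    conv_lhs => rw [← gaussianReal_map_neg v]
    rw [integral_map (by fun_prop)
      (by rw [gaussianReal_map_neg v]; exact hf.aestronglyMeasurable)]
  simp only [hodd, integral_neg] at h
  linarith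

private lemma intervalIntegral_even {f : ℝ → ℝ} (he : ∀ x, f (-x) = f x) (hc : Continuous f)
    (a : ℝ) : ∫ x in (-a)..a, f x = 2 * ∫ x in (0:ℝ)..a, f x := by
  have h1 := intervalIntegral.integral_comp_neg (a := (0:ℝ)) (b := a) f
  simp only [he, neg_zero] at h1
  rw [← intervalIntegral.integral_add_adjacent_intervals (a := -a) (b := 0) (c := a)
    (hc.intervalIntegrable _ _) (hc.intervalIntegrable _ _), ← h1]
  ring

set_option maxHeartbeats 1000000 in
theorem expected_clipped_gain (σ φ : ℝ) (hσ : 0 < σ) :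
    (∫ y : ℝ,
        (cos φ ^ 2 * (1 - min (y ^ 2) 1) + sin φ ^ 2 * min (y ^ 2) 1
          - Real.sign y * (2 * cos φ * sin φ)
            * Real.sqrt (min (y ^ 2) 1 - (min (y ^ 2) 1) ^ 2))
        ∂(gaussianReal 0 ⟨σ ^ 2, sq_nonneg σ⟩))
    = cos (2 * φ) * (1 - σ ^ 2) * erf (1 / Real.sqrt (2 * σ ^ 2))
        + Real.sqrt (2 * σ ^ 2 / π) * cos (2 * φ) * Real.exp (-(1 / (2 * σ ^ 2)))
        + sin φ ^ 2 := by
  have hπ0 : 0 < Real.sqrt π := Real.sqrt_pos.mpr Real.pi_pos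
  set sqpi : ℝ := Real.sqrt π with hsqpi
  have h2σ : (0:ℝ) < 2 * σ ^ 2 := by positivity
  set s : ℝ := Real.sqrt (2 * σ ^ 2) with hs
  have hs0 : 0 < s := Real.sqrt_pos.mpr h2σ
  have hs2 : s ^ 2 = 2 * σ ^ 2 := Real.sq_sqrt h2σ.le
  set a : ℝ := s⁻¹ with haa
  have ha0 : 0 < a := by positivity
  have ha2 : a ^ 2 = (2 * σ ^ 2)⁻¹ := by rw [haa, inv_pow, hs2]
  set v : ℝ≥0 := (⟨σ ^ 2, sq_nonneg σ⟩ : ℝ≥0) with hv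
  have hv0 : v ≠ 0 := by
    intro h
    have : (v : ℝ) = 0 := by rw [h]; simp
    simp only [hv, NNReal.coe_mk] at this
    change σ ^ 2 = 0 at this
    nlinarith
  have hvr : (v : ℝ) = σ ^ 2 := rfl
  clear_value sqpi s a v
  set μ : Measure ℝ := gaussianReal 0 v with hμ
  set p : ℝ → ℝ := gaussianPDFReal 0 v with hp
  set K : ℝ := ∫ u in (0:ℝ)..a, Real.exp (-(u ^ 2)) with hK
  set X : ℝ → ℝ := fun y => min (y ^ 2) 1 with hX
  set g2 : ℝ → ℝ := fun y => Real.sign y * Real.sqrt (X y - (X y) ^ 2) with hg2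
  have hXm : Measurable X := (measurable_id.pow_const 2).min measurable_const
  have hX0 : ∀ y, 0 ≤ X y := fun y => le_min (sq_nonneg y) zero_le_one
  have hX1 : ∀ y, X y ≤ 1 := fun y => min_le_right _ _
  have hg2m : Measurable g2 :=
    measurable_realSign.mul ((hXm.sub (hXm.pow_const 2)).sqrt)
  have hsign1 : ∀ y : ℝ, |Real.sign y| ≤ 1 := by
    intro y
    rcases lt_trichotomy y 0 with h | h | h
    · simp [Real.sign_of_neg h]
    · simp [h]
    · simp [Real.sign_of_pos h]
  have hg2b : ∀ y, ‖g2 y‖ ≤ 1 := by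
    intro y
    have h1 : Real.sqrt (X y - (X y) ^ 2) ≤ 1 := by
      rw [Real.sqrt_le_one]
      nlinarith [hX0 y, hX1 y]
    have h2 : |Real.sqrt (X y - (X y) ^ 2)| ≤ 1 := by
      rw [abs_of_nonneg (Real.sqrt_nonneg _)]; exact h1
    calc ‖g2 y‖ = |Real.sign y| * |Real.sqrt (X y - (X y) ^ 2)| := by
          rw [hg2]; exact abs_mul _ _
      _ ≤ 1 := mul_le_one₀ (hsign1 y) (abs_nonneg _) h2
  have hbint : ∀ f : ℝ → ℝ, Measurable f → (∀ y, ‖f y‖ ≤ 1) → Integrable f μ := by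
    intro f hm hb
    exact ⟨hm.aestronglyMeasurable, HasFiniteIntegral.of_bounded (C := 1) (ae_of_all _ hb)⟩
  have hXint : Integrable X μ := hbint X hXm (fun y => by
    rw [Real.norm_eq_abs, abs_of_nonneg (hX0 y)]; exact hX1 y)
  have hg2int : Integrable g2 μ := hbint g2 hg2m hg2b
  -- step 1: rewrite the integrand
  have hsplit : (∫ y : ℝ,
        (cos φ ^ 2 * (1 - min (y ^ 2) 1) + sin φ ^ 2 * min (y ^ 2) 1
          - Real.sign y * (2 * cos φ * sin φ)
            * Real.sqrt (min (y ^ 2) 1 - (min (y ^ 2) 1) ^ 2)) ∂μ)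
      = ∫ y, (cos φ ^ 2 + ((sin φ ^ 2 - cos φ ^ 2) * X y - (2 * cos φ * sin φ) * g2 y)) ∂μ := by
    apply integral_congr_ae
    filter_upwards with y
    simp only [hg2, hX]
    ring
  rw [hsplit]
  have hint2 : Integrable
      (fun y => (sin φ ^ 2 - cos φ ^ 2) * X y - 2 * cos φ * sin φ * g2 y) μ :=
    (hXint.const_mul _).sub (hg2int.const_mul _)
  rw [integral_add (integrable_const _) hint2,
    integral_sub (hXint.const_mul _) (hg2int.const_mul _),
    MeasureTheory.integral_const_mul, MeasureTheory.integral_const_mul, integral_const]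
  have hprob : μ.real Set.univ = 1 := by
    rw [hμ]; simp
  rw [hprob]
  -- step 2: odd term vanishes
  have hodd : ∫ y, g2 y ∂μ = 0 := by
    apply integral_odd_gaussianReal g2 hg2m
    intro y
    simp only [hg2, hX, neg_sq]
    rcases lt_trichotomy y 0 with h | h | h
    · rw [Real.sign_of_pos (by linarith : 0 < -y), Real.sign_of_neg h]; ring
    · simp [h]
    · rw [Real.sign_of_neg (by linarith : -y < 0), Real.sign_of_pos h]; ring
  rw [hodd, mul_zero, sub_zero]
  -- step 3: compute E1 = ∫ X dμ
  have hp_int : Integrable p := integrable_gaussianPDFReal 0 v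
  have hp_nonneg : ∀ y, 0 ≤ p y := gaussianPDFReal_nonneg 0 v
  have hp_meas : Measurable p := measurable_gaussianPDFReal 0 v
  have hpX_int : Integrable (fun y => p y * X y) := by
    refine hp_int.mono' (hp_meas.mul hXm).aestronglyMeasurable (ae_of_all _ fun y => ?_)
    rw [Real.norm_eq_abs, abs_mul, abs_of_nonneg (hp_nonneg y), abs_of_nonneg (hX0 y)]
    nlinarith [hp_nonneg y, hX0 y, hX1 y]
  have hconv : ∫ y, X y ∂μ = ∫ y, p y * X y := integral_gaussianReal_eq' hv0 X
  set I : Set ℝ := Set.Icc (-1:ℝ) 1 with hI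
  have hIm : MeasurableSet I := measurableSet_Icc
  have hIcc : ∀ f : ℝ → ℝ, ∫ y in I, f y = ∫ y in (-1:ℝ)..1, f y := by
    intro f
    rw [intervalIntegral.integral_of_le (by norm_num : (-1:ℝ) ≤ 1), hI,
      MeasureTheory.integral_Icc_eq_integral_Ioc]
  have hsplit2 : ∫ y, p y * X y = (∫ y in I, p y * X y) + ∫ y in Iᶜ, p y * X y :=
    (integral_add_compl hIm hpX_int).symm
  have hI1 : ∫ y in I, p y * X y = ∫ y in I, p y * y ^ 2 := by
    apply setIntegral_congr_fun hIm
    intro y hy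
    have h1 : y ^ 2 ≤ 1 := by
      rcases hy with ⟨h1, h2⟩; nlinarith
    simp only [hX, min_eq_left h1]
  have hI2 : ∫ y in Iᶜ, p y * X y = ∫ y in Iᶜ, p y := by
    apply setIntegral_congr_fun hIm.compl
    intro y hy
    have h1 : (1:ℝ) ≤ y ^ 2 := by
      simp only [hI, Set.mem_compl_iff, Set.mem_Icc, not_and_or, not_le] at hy
      rcases hy with h | h <;> nlinarith
    simp only [hX, min_eq_right h1, mul_one]
  have hcompl : ∫ y in Iᶜ, p y = 1 - ∫ y in I, p y := by
    have h := integral_add_compl hIm hp_int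
    rw [hp, integral_gaussianPDFReal_eq_one 0 hv0] at h
    linarith
  -- the pdf rewritten
  set c0 : ℝ := (sqpi * s)⁻¹ with hc0
  have hp_eq : ∀ y, p y = c0 * Real.exp (-((y * a) ^ 2)) := by
    intro y
    rw [hp, gaussianPDFReal]
    have h1 : Real.sqrt (2 * π * (v:ℝ)) = sqpi * s := by
      rw [hvr, show 2 * π * σ ^ 2 = π * (2 * σ ^ 2) by ring,
        Real.sqrt_mul Real.pi_nonneg, ← hsqpi, ← hs]
    have h2 : -(y - 0) ^ 2 / (2 * (v:ℝ)) = -((y * a) ^ 2) := by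
      rw [hvr, mul_pow, ha2]
      field_simp
      ring
    rw [h1, h2, hc0]
  -- compute A = ∫_I p
  have hcont1 : Continuous fun x : ℝ => Real.exp (-(x ^ 2)) := by fun_prop
  have hcont2 : Continuous fun x : ℝ => x ^ 2 * Real.exp (-(x ^ 2)) := by fun_prop
  have hA : ∫ y in (-1:ℝ)..1, p y = sqpi⁻¹ * (2 * K) := by
    have h1 : ∫ y in (-1:ℝ)..1, p y = c0 * ∫ y in (-1:ℝ)..1, Real.exp (-((y * a) ^ 2)) := by
      rw [← intervalIntegral.integral_const_mul]
      apply intervalIntegral.integral_congr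
      intro y _; exact hp_eq y
    have h2 := intervalIntegral.integral_comp_mul_right (a := (-1:ℝ)) (b := 1)
      (fun x => Real.exp (-(x ^ 2))) (ne_of_gt ha0)
    simp only [neg_one_mul, one_mul, smul_eq_mul] at h2
    have h3 : ∫ x in (-a)..a, Real.exp (-(x ^ 2)) = 2 * K := by
      rw [intervalIntegral_even (fun x => by rw [neg_sq]) hcont1 a, hK]
    rw [h1, h2, h3, hc0, haa, inv_inv]
    field_simp
  -- compute B = ∫_I p y * y^2
  have hB : ∫ y in (-1:ℝ)..1, p y * y ^ 2
      = σ ^ 2 * (sqpi⁻¹ * (2 * K)) - sqpi⁻¹ * s * Real.exp (-(a ^ 2)) := by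
    have hpy2 : ∀ y, p y * y ^ 2
        = (2 * σ ^ 2) * c0 * ((y * a) ^ 2 * Real.exp (-((y * a) ^ 2))) := by
      intro y
      rw [hp_eq y, mul_pow, ha2]
      field_simp
    have h1 : ∫ y in (-1:ℝ)..1, p y * y ^ 2
        = (2 * σ ^ 2) * c0 * ∫ y in (-1:ℝ)..1, ((y * a) ^ 2 * Real.exp (-((y * a) ^ 2))) := by
      rw [← intervalIntegral.integral_const_mul]
      apply intervalIntegral.integral_congr
      intro y _; exact hpy2 y
    have h2 := intervalIntegral.integral_comp_mul_right (a := (-1:ℝ)) (b := 1)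
      (fun x => x ^ 2 * Real.exp (-(x ^ 2))) (ne_of_gt ha0)
    simp only [neg_one_mul, one_mul, smul_eq_mul] at h2
    set M : ℝ := ∫ x in (0:ℝ)..a, x ^ 2 * Real.exp (-(x ^ 2)) with hM
    have h3 : ∫ x in (-a)..a, x ^ 2 * Real.exp (-(x ^ 2)) = 2 * M := by
      rw [intervalIntegral_even (fun x => by rw [neg_sq]) hcont2 a, hM]
    have hMval : M = (1/2) * K - (a/2) * Real.exp (-(a ^ 2)) := by
      have hFTC : ∫ x in (0:ℝ)..a, (x ^ 2 - 1/2) * Real.exp (-(x ^ 2))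
          = -(a/2) * Real.exp (-(a ^ 2)) - (-((0:ℝ)/2) * Real.exp (-((0:ℝ) ^ 2))) := by
        refine intervalIntegral.integral_eq_sub_of_hasDerivAt
          (f := fun x => -(x/2) * Real.exp (-(x ^ 2))) (fun x _ => ?_) ?_
        · have hexp : HasDerivAt (fun x : ℝ => Real.exp (-(x ^ 2)))
              (Real.exp (-(x ^ 2)) * (-(2 * x ^ 1))) x := ((hasDerivAt_pow 2 x).neg).exp
          have hd := (((hasDerivAt_id x).div_const 2).neg).mul hexp
          convert hd using 1
          · rfl
          · rfl
          · simp; ring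
        · exact Continuous.intervalIntegrable (by fun_prop) _ _
      have hsub : ∫ x in (0:ℝ)..a, (x ^ 2 - 1/2) * Real.exp (-(x ^ 2))
          = M - (1/2) * K := by
        have heq : ∀ x : ℝ, (x ^ 2 - 1/2) * Real.exp (-(x ^ 2))
            = x ^ 2 * Real.exp (-(x ^ 2)) - (1/2) * Real.exp (-(x ^ 2)) := by
          intro x; ring
        rw [intervalIntegral.integral_congr (fun x _ => heq x),
          intervalIntegral.integral_sub (hcont2.intervalIntegrable _ _)
            ((hcont1.intervalIntegrable _ _).const_mul _),
          intervalIntegral.integral_const_mul, hM, hK]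
      rw [hsub] at hFTC
      simp only [zero_pow, ne_eq, OfNat.ofNat_ne_zero, not_false_eq_true, neg_zero,
        Real.exp_zero, zero_div, neg_zero, zero_mul, sub_zero] at hFTC
      linarith
    rw [h1, h2, h3, hMval, hc0, haa, inv_inv]
    have hσ2 : σ ^ 2 = s ^ 2 / 2 := by rw [hs2]; ring
    rw [hσ2]
    field_simp
  -- assemble E1
  have hE1 : ∫ y, X y ∂μ
      = (σ ^ 2 * (sqpi⁻¹ * (2 * K)) - sqpi⁻¹ * s * Real.exp (-(a ^ 2)))
        + (1 - sqpi⁻¹ * (2 * K)) := by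
    rw [hconv, hsplit2, hI1, hI2, hcompl, hIcc (fun y => p y * y ^ 2), hIcc p, hA, hB]
  rw [hE1]
  -- final algebra
  have herf : erf (1 / s) = sqpi⁻¹ * (2 * K) := by
    rw [erf, one_div, ← haa, ← hK, ← hsqpi]
    ring
  have hsqrt : Real.sqrt (2 * σ ^ 2 / π) = s / sqpi := by
    rw [Real.sqrt_div h2σ.le, ← hs, ← hsqpi]
  have hexp : Real.exp (-(1 / (2 * σ ^ 2))) = Real.exp (-(a ^ 2)) := by
    rw [ha2, one_div]
  have hcos : cos (2 * φ) = cos φ ^ 2 - sin φ ^ 2 := Real.cos_two_mul' φ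
  rw [herf, hsqrt, hexp, hcos, one_smul]
  field_simp
  ring
end
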